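/- If ρ is an extremal realisation of a family of configurations F and f : ρ → ρ' is a map of realisations, then ρ' is extremal and f factors as a projection ρ → ρ₀ followed by an isomorphism ρ₀ ≅ ρ'; moreover the carrier R₀ of ρ₀ is a down-closed subset of the carrier R of ρ, with order the restriction of the order on R. -/

import Mathlib

universe u v w

/-- The image of a set under a partial function. -/
def pimage {α : Type u} {β : Type v} (f : α → Option β) (x : Set α) : Set β :=
  {b | ∃ a ∈ x, f a = some b}

/-- A family of configurations over the set of events `A`:
a non-empty family of subsets, whose underlying set is all of `A`,
closed under unions of finitely compatible subfamilies,
and satisfying the securing-chain condition. -/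
structure ConfigFamily (A : Type u) where
  F : Set (Set A)
  nonempty : F.Nonempty
  covers : ∀ a : A, ∃ x ∈ F, a ∈ x
  unionClosed : ∀ X ⊆ F, (∀ Y ⊆ X, Y.Finite → ∃ z ∈ F, ∀ y ∈ Y, y ⊆ z) → ⋃₀ X ∈ F
  secured : ∀ x ∈ F, ∀ e ∈ x, ∃ l : List A, l ≠ [] ∧ l.getLast? = some e ∧
    (∀ a ∈ l, a ∈ x) ∧ ∀ i, 0 < i → i ≤ l.length → {a | a ∈ l.take i} ∈ F

/-- A causal realisation of the family `C`: a partial order whose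
principal lower sets are finite, together with a function to events
sending every down-closed subset to a configuration of the family. -/
structure Realisation {A : Type u} (C : ConfigFamily A) where
  carrier : Type u
  le : carrier → carrier → Prop
  le_refl : ∀ a, le a a
  le_trans : ∀ a b c, le a b → le b c → le a c
  le_antisymm : ∀ a b, le a b → le b a → a = b
  finPast : ∀ e, {e' | le e' e}.Finite
  ρ : carrier → A
  real : ∀ x : Set carrier, (∀ a ∈ x, ∀ b, le b a → b ∈ x) → ρ '' x ∈ C.F

namespace Realisation

variable {A : Type u} {C : ConfigFamily A}

/-- Down-closed subsets of the carrier of a realisation. -/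
def IsDown (r : Realisation C) (x : Set r.carrier) : Prop :=
  ∀ a ∈ x, ∀ b, r.le b a → b ∈ x

/-- The set `[a) = [a] \ {a}` of strict predecessors. -/
def spred (r : Realisation C) (a : r.carrier) : Set r.carrier :=
  {b | r.le b a ∧ b ≠ a}

/-- The carrier has a top element. -/
def HasTop (r : Realisation C) : Prop := ∃ t, ∀ a, r.le a t

end Realisation

/-- A map of realisations: a partial surjective function between the carriers,
preserving down-closed subsets and commuting with the functions to events. -/
structure RealMap {A : Type u} {C : ConfigFamily A} (r r' : Realisation C) where
  f : r.carrier → Option r'.carrier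
  surj : ∀ b, ∃ a, f a = some b
  presDown : ∀ x, r.IsDown x → r'.IsDown (pimage f x)
  commutes : ∀ a b, f a = some b → r.ρ a = r'.ρ b

namespace RealMap

variable {A : Type u} {C : ConfigFamily A} {r r' r₀ : Realisation C}

/-- The map is total. -/
def IsTotal (m : RealMap r r') : Prop := ∀ a, ∃ b, m.f a = some b

/-- The map is an isomorphism of realisations: it has an inverse map of
realisations, given by the inverse relation. -/
def IsIso (m : RealMap r r') : Prop :=
  ∃ m' : RealMap r' r, ∀ a b, m.f a = some b ↔ m'.f b = some a

/-- `m : r → r₀` is a projection witnessed by `g`: `g` realises the carrier of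
`r₀` as a subset of the carrier of `r` with the restricted order and restricted
function to events, and `m` is the inverse relation of this inclusion. -/
def IsProjectionVia (m : RealMap r r₀) (g : r₀.carrier → r.carrier) : Prop :=
  Function.Injective g ∧ (∀ a b, r₀.le a b ↔ r.le (g a) (g b)) ∧
    (∀ a, r₀.ρ a = r.ρ (g a)) ∧ (∀ a b, m.f a = some b ↔ g b = a)

/-- `m` is a projection. -/
def IsProjection (m : RealMap r r₀) : Prop := ∃ g, m.IsProjectionVia g

end RealMap

/-- A realisation is extremal when every total map of realisations from it
is an isomorphism. -/
def Realisation.Extremal {A : Type u} {C : ConfigFamily A} (r : Realisation C) : Prop :=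
  ∀ (r' : Realisation C) (m : RealMap r r'), m.IsTotal → m.IsIso

/-- A prime extremal realisation: extremal with a top element. -/
def Realisation.PrimeExtremal {A : Type u} {C : ConfigFamily A} (r : Realisation C) : Prop :=
  r.Extremal ∧ r.HasTop

/-- Isomorphism of realisations. -/
def RealIso {A : Type u} {C : ConfigFamily A} (r r' : Realisation C) : Prop :=
  ∃ m : RealMap r r', m.IsIso

/-- `m` is the composite of `m₁` followed by `m₂` (as partial functions). -/
def CompEq {A : Type u} {C : ConfigFamily A} {r r' r'' : Realisation C}
    (m₁ : RealMap r r') (m₂ : RealMap r' r'') (m : RealMap r r'') : Prop :=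
  ∀ a c, m.f a = some c ↔ ∃ b, m₁.f a = some b ∧ m₂.f b = some c

section Auxiliary

open Classical in
/-- Composition of maps of realisations. -/
noncomputable def RealMap.comp {A : Type u} {C : ConfigFamily A} {r r' r'' : Realisation C}
    (m₁ : RealMap r r') (m₂ : RealMap r' r'') : RealMap r r'' where
  f a := (m₁.f a).bind m₂.f
  surj := by
    intro c
    obtain ⟨b, hb⟩ := m₂.surj c
    obtain ⟨a, ha⟩ := m₁.surj b
    exact ⟨a, by show (m₁.f a).bind m₂.f = some c; rw [ha]; exact hb⟩
  presDown := by
    intro x hx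
    have heq : pimage (fun a => (m₁.f a).bind m₂.f) x = pimage m₂.f (pimage m₁.f x) := by
      ext c
      constructor
      · rintro ⟨a, ha, hc⟩
        rw [Option.bind_eq_some_iff] at hc
        obtain ⟨b, hb, hc⟩ := hc
        exact ⟨b, ⟨a, ha, hb⟩, hc⟩
      · rintro ⟨b, ⟨a, ha, hb⟩, hc⟩
        exact ⟨a, ha, by show (m₁.f a).bind m₂.f = some c; rw [hb]; exact hc⟩
    rw [heq]
    exact m₂.presDown _ (m₁.presDown x hx)
  commutes := by
    intro a c h
    rw [Option.bind_eq_some_iff] at h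
    obtain ⟨b, hb, hc⟩ := h
    rw [m₁.commutes a b hb, m₂.commutes b c hc]

namespace StmtAux

variable {A : Type u} {C : ConfigFamily A}

variable {r r' : Realisation C}

/-- The sum carrier: `r'` together with the part of `r` outside the domain of `f`. -/
def SumCar (f : RealMap r r') : Type u :=
  r'.carrier ⊕ {a : r.carrier // ¬∃ b, f.f a = some b}

/-- The order on the sum carrier. -/
def sle (f : RealMap r r') : SumCar f → SumCar f → Prop
  | Sum.inl b', Sum.inl c' => r'.le b' c'
  | Sum.inl b', Sum.inr a => ∃ c c', r.le c a.1 ∧ f.f c = some c' ∧ r'.le b' c'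
  | Sum.inr _, Sum.inl _ => False
  | Sum.inr a, Sum.inr b => r.le a.1 b.1

/-- The total function from `r` to the sum carrier. -/
noncomputable def mfun (f : RealMap r r') (a : r.carrier) : SumCar f :=
  @dite _ (∃ b, f.f a = some b) (Classical.dec _)
    (fun h => Sum.inl ((f.f a).get (Option.isSome_iff_exists.mpr h)))
    (fun h => Sum.inr ⟨a, h⟩)

lemma mfun_inl (f : RealMap r r') {a : r.carrier} {b : r'.carrier} (h : f.f a = some b) :
    mfun f a = Sum.inl b := by
  have he : ∃ b, f.f a = some b := ⟨b, h⟩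
  unfold mfun
  erw [dif_pos he]
  congr 1
  simp only [h, Option.get_some]

lemma mfun_inr (f : RealMap r r') {a : r.carrier} (h : ¬∃ b, f.f a = some b) :
    mfun f a = Sum.inr ⟨a, h⟩ := by
  unfold mfun
  exact dif_neg h

/-- The sum realisation. -/
def sumReal (f : RealMap r r') : Realisation C where
  carrier := SumCar f
  le := sle f
  le_refl := by
    rintro (b' | a)
    · exact r'.le_refl b'
    · exact r.le_refl a.1
  le_trans := by
    rintro (b' | a) (c' | b) (d' | c) h₁ h₂
    · exact r'.le_trans _ _ _ h₁ h₂
    · obtain ⟨e, e', he, hfe, hle⟩ := h₂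
      exact ⟨e, e', he, hfe, r'.le_trans _ _ _ h₁ hle⟩
    · exact h₂.elim
    · obtain ⟨e, e', he, hfe, hle⟩ := h₁
      exact ⟨e, e', r.le_trans _ _ _ he h₂, hfe, hle⟩
    · exact h₁.elim
    · exact h₁.elim
    · exact h₂.elim
    · exact r.le_trans _ _ _ h₁ h₂
  le_antisymm := by
    rintro (b' | a) (c' | b) h₁ h₂
    · rw [r'.le_antisymm _ _ h₁ h₂]
    · exact h₂.elim
    · exact h₁.elim
    · congr 1
      exact Subtype.ext (r.le_antisymm _ _ h₁ h₂)
  finPast := by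
    rintro (c' | a)
    · apply Set.Finite.subset ((r'.finPast c').image Sum.inl)
      rintro (b' | b) h
      · exact ⟨b', h, rfl⟩
      · exact h.elim
    · have hT : (⋃ c ∈ {c | r.le c a.1}, {b' | ∃ c', f.f c = some c' ∧ r'.le b' c'}).Finite := by
        apply Set.Finite.biUnion (r.finPast a.1)
        intro c _
        rcases hfc : f.f c with _ | c₀
        · convert Set.finite_empty
          ext b'
          simp [hfc]
        · apply Set.Finite.subset (r'.finPast c₀)
          rintro b' ⟨c', hc', hle⟩
          injection hc' with hc'
          rw [← hc'] at hle
          exact hle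
      have hS : ({b : {a : r.carrier // ¬∃ b, f.f a = some b} | r.le b.1 a.1}).Finite := by
        have : {b : {a : r.carrier // ¬∃ b, f.f a = some b} | r.le b.1 a.1}
            = Subtype.val ⁻¹' {b | r.le b a.1} := rfl
        rw [this]
        exact Set.Finite.preimage (Set.injOn_of_injective Subtype.val_injective)
          (r.finPast a.1)
      apply Set.Finite.subset ((hT.image Sum.inl).union (hS.image Sum.inr))
      rintro (b' | b) h
      · left
        obtain ⟨c, c', hca, hfc, hle⟩ := h
        refine ⟨b', ?_, rfl⟩
        simp only [Set.mem_iUnion]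
        exact ⟨c, hca, c', hfc, hle⟩
      · right
        exact ⟨b, h, rfl⟩
  ρ := Sum.elim r'.ρ (fun a => r.ρ a.1)
  real := by
    intro x hx
    set w₁ : Set r'.carrier := {b' | Sum.inl b' ∈ x} with hw₁def
    set y : Set r.carrier :=
      {b | ∃ a, (∃ h : ¬∃ b, f.f a = some b, Sum.inr ⟨a, h⟩ ∈ x) ∧ r.le b a} with hydef
    have hw₁ : r'.IsDown w₁ := by
      intro b' hb' c' hc'
      exact hx (Sum.inl b') hb' (Sum.inl c') hc'
    have hF₁ : r'.ρ '' w₁ ∈ C.F := r'.real w₁ hw₁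
    have hy : r.IsDown y := by
      rintro a ⟨c, hc, hac⟩ b hba
      exact ⟨c, hc, r.le_trans _ _ _ hba hac⟩
    have hFy : r.ρ '' y ∈ C.F := r.real y hy
    have himg : (Sum.elim r'.ρ (fun a : {a : r.carrier // ¬∃ b, f.f a = some b} => r.ρ a.1)) '' x
        = r'.ρ '' w₁ ∪ r.ρ '' y := by
      apply Set.Subset.antisymm
      · rintro _ ⟨(b' | a), hu, rfl⟩
        · exact Or.inl ⟨b', hu, rfl⟩
        · exact Or.inr ⟨a.1, ⟨a.1, ⟨a.2, hu⟩, r.le_refl _⟩, rfl⟩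
      · rintro _ (⟨b', hb', rfl⟩ | ⟨b, hb, rfl⟩)
        · exact ⟨Sum.inl b', hb', rfl⟩
        · obtain ⟨a, ⟨ha, hax⟩, hba⟩ := hb
          by_cases hd : ∃ c', f.f b = some c'
          · obtain ⟨b', hb'⟩ := hd
            have hmem : Sum.inl b' ∈ x :=
              hx (Sum.inr ⟨a, ha⟩) hax (Sum.inl b') ⟨b, b', hba, hb', r'.le_refl _⟩
            exact ⟨Sum.inl b', hmem, (f.commutes b b' hb').symm⟩
          · have hmem : Sum.inr ⟨b, hd⟩ ∈ x :=
              hx (Sum.inr ⟨a, ha⟩) hax (Sum.inr ⟨b, hd⟩) hba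
            exact ⟨Sum.inr ⟨b, hd⟩, hmem, rfl⟩
    erw [himg]
    have huniv : r.ρ '' Set.univ ∈ C.F := r.real Set.univ (by intro a _ b _; trivial)
    have hsub₁ : r'.ρ '' w₁ ⊆ r.ρ '' Set.univ := by
      rintro _ ⟨b', _, rfl⟩
      obtain ⟨a, ha⟩ := f.surj b'
      exact ⟨a, trivial, f.commutes a b' ha⟩
    have hsub₂ : r.ρ '' y ⊆ r.ρ '' Set.univ :=
      Set.image_mono (Set.subset_univ _)
    have hU := C.unionClosed {r'.ρ '' w₁, r.ρ '' y} ?_ ?_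
    · rwa [Set.sUnion_pair] at hU
    · rintro s (rfl | rfl)
      · exact hF₁
      · exact hFy
    · intro Y _ _
      refine ⟨r.ρ '' Set.univ, huniv, ?_⟩
      intro s hs
      rcases ‹Y ⊆ {r'.ρ '' w₁, r.ρ '' y}› hs with rfl | rfl
      · exact hsub₁
      · exact hsub₂

/-- The total map from `r` to the sum realisation. -/
noncomputable def sumMap (f : RealMap r r') : RealMap r (sumReal f) where
  f a := some (mfun f a)
  surj := by
    rintro (b' | ⟨a, ha⟩)
    · obtain ⟨a, ha⟩ := f.surj b'
      exact ⟨a, by show some (mfun f a) = _; rw [mfun_inl f ha]; rfl⟩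
    · exact ⟨a, by show some (mfun f a) = _; rw [mfun_inr f ha]; rfl⟩
  presDown := by
    intro x hx
    have himg : pimage (fun a => some (mfun f a)) x = mfun f '' x := by
      ext u
      constructor
      · rintro ⟨a, ha, h⟩
        injection h with h
        exact ⟨a, ha, h⟩
      · rintro ⟨a, ha, h⟩
        exact ⟨a, ha, by show some (mfun f a) = some u; rw [h]⟩
    erw [himg]
    rintro u ⟨a, ha, rfl⟩ v hv
    rcases hfa : f.f a with _ | a'
    · have hna : ¬∃ b, f.f a = some b := by
        rintro ⟨b, hb⟩; rw [hfa] at hb; exact nomatch hb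
      rw [mfun_inr f hna] at hv
      rcases v with b' | ⟨b, hb⟩
      · obtain ⟨c, c', hca, hfc, hb'c'⟩ := hv
        have hc : c ∈ x := hx a ha c hca
        have hb' : b' ∈ pimage f.f x :=
          f.presDown x hx c' ⟨c, hc, hfc⟩ b' hb'c'
        obtain ⟨d, hd, hfd⟩ := hb'
        exact ⟨d, hd, mfun_inl f hfd⟩
      · have hbx : b ∈ x := hx a ha b hv
        exact ⟨b, hbx, mfun_inr f hb⟩
    · rw [mfun_inl f hfa] at hv
      rcases v with b' | ⟨b, hb⟩
      · obtain ⟨d, hd, hfd⟩ :=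
          f.presDown x hx a' ⟨a, ha, hfa⟩ b' hv
        exact ⟨d, hd, mfun_inl f hfd⟩
      · exact hv.elim
  commutes := by
    intro a u h
    injection h with h
    subst h
    rcases hfa : f.f a with _ | a'
    · have hna : ¬∃ b, f.f a = some b := by
        rintro ⟨b, hb⟩; rw [hfa] at hb; exact nomatch hb
      rw [mfun_inr f hna]
      rfl
    · rw [mfun_inl f hfa]
      exact f.commutes a a' hfa

/-- The key consequence of extremality: the domain of `f` is down-closed,
`f` is monotone on its domain, and injective on its domain. -/
lemma key (f : RealMap r r') (hr : r.Extremal) :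
    (∀ a b b', r.le a b → f.f b = some b' → ∃ a', f.f a = some a' ∧ r'.le a' b') ∧
    (∀ a b c, f.f a = some c → f.f b = some c → a = b) := by
  obtain ⟨m', hiff⟩ := hr (sumReal f) (sumMap f) (fun a => ⟨mfun f a, rfl⟩)
  constructor
  · intro a b b' hab hfb
    set x₂ : Set (SumCar f) := {u | sle f u (Sum.inl b')} with hx₂
    have hdown : (sumReal f).IsDown x₂ := by
      intro u hu v hv
      exact (sumReal f).le_trans v u (Sum.inl b') hv hu
    have hS := m'.presDown x₂ hdown
    have hmb : (sumMap f).f b = some (Sum.inl b') := by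
      show some (mfun f b) = _
      rw [mfun_inl f hfb]; rfl
    have hbS : b ∈ pimage m'.f x₂ :=
      ⟨Sum.inl b', r'.le_refl b', (hiff b (Sum.inl b')).mp hmb⟩
    obtain ⟨u, hu, hua⟩ := hS b hbS a hab
    have hma : (sumMap f).f a = some u := (hiff a u).mpr hua
    have hmu : mfun f a = u := by injection hma
    rcases hfa : f.f a with _ | a'
    · have hna : ¬∃ b, f.f a = some b := by
        rintro ⟨b, hb⟩; rw [hfa] at hb; exact nomatch hb
      rw [mfun_inr f hna] at hmu
      rw [← hmu] at hu
      exact hu.elim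
    · refine ⟨a', rfl, ?_⟩
      rw [mfun_inl f hfa] at hmu
      rw [← hmu] at hu
      exact hu
  · intro a b c hfa hfb
    have h1 : (sumMap f).f a = some (Sum.inl c) := by
      show some (mfun f a) = _
      rw [mfun_inl f hfa]; rfl
    have h2 : (sumMap f).f b = some (Sum.inl c) := by
      show some (mfun f b) = _
      rw [mfun_inl f hfb]; rfl
    have := ((hiff a (Sum.inl c)).mp h1).symm.trans ((hiff b (Sum.inl c)).mp h2)
    injection this

/-- Down-closedness hypothesis abbreviation. -/
def DC (f : RealMap r r') : Prop :=
  ∀ a b b', r.le a b → f.f b = some b' → ∃ a', f.f a = some a' ∧ r'.le a' b'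

/-- The realisation on the domain of `f`. -/
def domReal (f : RealMap r r') (hdc : DC f) : Realisation C where
  carrier := {a : r.carrier // ∃ b, f.f a = some b}
  le a b := r.le a.1 b.1
  le_refl a := r.le_refl a.1
  le_trans a b c := r.le_trans a.1 b.1 c.1
  le_antisymm a b h₁ h₂ := Subtype.ext (r.le_antisymm a.1 b.1 h₁ h₂)
  finPast e := by
    have : {e' : {a : r.carrier // ∃ b, f.f a = some b} | r.le e'.1 e.1}
        = Subtype.val ⁻¹' {b | r.le b e.1} := rfl
    rw [this]
    exact Set.Finite.preimage (Set.injOn_of_injective Subtype.val_injective) (r.finPast e.1)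
  ρ a := r.ρ a.1
  real := by
    intro x hx
    have hdown : r.IsDown (Subtype.val '' x) := by
      rintro _ ⟨a, ha, rfl⟩ b hb
      obtain ⟨a', ha'⟩ := a.2
      obtain ⟨b', hfb, _⟩ := hdc b a.1 a' hb ha'
      exact ⟨⟨b, b', hfb⟩, hx a ha ⟨b, b', hfb⟩ hb, rfl⟩
    have := r.real _ hdown
    rwa [Set.image_image] at this

lemma val_image_down (f : RealMap r r') (hdc : DC f) {x : Set (domReal f hdc).carrier}
    (hx : (domReal f hdc).IsDown x) : r.IsDown (Subtype.val '' x) := by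
  rintro _ ⟨a, ha, rfl⟩ b hb
  obtain ⟨a', ha'⟩ := a.2
  obtain ⟨b', hfb, _⟩ := hdc b a.1 a' hb ha'
  exact ⟨⟨b, b', hfb⟩, hx a ha ⟨b, b', hfb⟩ hb, rfl⟩

/-- The underlying partial function of the projection. -/
noncomputable def pfun (f : RealMap r r') (hdc : DC f) (a : r.carrier) :
    Option (domReal f hdc).carrier :=
  @dite _ (∃ b, f.f a = some b) (Classical.dec _) (fun h => some ⟨a, h⟩) (fun _ => none)

lemma pfun_pos (f : RealMap r r') (hdc : DC f) {a : r.carrier} (h : ∃ b, f.f a = some b) :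
    pfun f hdc a = some ⟨a, h⟩ := by
  unfold pfun
  exact dif_pos h

lemma pfun_neg (f : RealMap r r') (hdc : DC f) {a : r.carrier} (h : ¬∃ b, f.f a = some b) :
    pfun f hdc a = none := by
  unfold pfun
  exact dif_neg h

/-- The projection from `r` onto the domain of `f`. -/
noncomputable def domProj (f : RealMap r r') (hdc : DC f) : RealMap r (domReal f hdc) where
  f := pfun f hdc
  surj b := ⟨b.1, (pfun_pos f hdc b.2).trans rfl⟩

  presDown := by
    intro x hx u hu v hv
    obtain ⟨a, ha, hfa⟩ := hu
    by_cases h : ∃ b, f.f a = some b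
    · rw [pfun_pos f hdc h] at hfa
      injection hfa with hfa
      subst hfa
      refine ⟨v.1, hx a ha v.1 hv, ?_⟩
      exact (pfun_pos f hdc v.2).trans rfl
    · rw [pfun_neg f hdc h] at hfa
      exact nomatch hfa
  commutes := by
    intro a b h
    by_cases hd : ∃ b, f.f a = some b
    · rw [pfun_pos f hdc hd] at h
      injection h with h
      subst h
      rfl
    · rw [pfun_neg f hdc hd] at h
      exact nomatch h

/-- The total map from the domain of `f` to `r'`. -/
def domIncl (f : RealMap r r') (hdc : DC f) : RealMap (domReal f hdc) r' where
  f a := f.f a.1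
  surj b' := by
    obtain ⟨a, ha⟩ := f.surj b'
    exact ⟨⟨a, b', ha⟩, ha⟩
  presDown := by
    intro x hx
    have hdown := val_image_down f hdc hx
    have heq : pimage (fun a : (domReal f hdc).carrier => f.f a.1) x
        = pimage f.f (Subtype.val '' x) := by
      ext b'
      constructor
      · rintro ⟨a, ha, hfa⟩
        exact ⟨a.1, ⟨a, ha, rfl⟩, hfa⟩
      · rintro ⟨_, ⟨a, ha, rfl⟩, hfa⟩
        exact ⟨a, ha, hfa⟩
    rw [heq]
    exact f.presDown _ hdown
  commutes a b h := f.commutes a.1 b h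

/-- The inverse of `domIncl`. -/
noncomputable def domInv (f : RealMap r r') (hdc : DC f)
    (hinj : ∀ a b c, f.f a = some c → f.f b = some c → a = b) :
    RealMap r' (domReal f hdc) where
  f b' := some ⟨(f.surj b').choose, b', (f.surj b').choose_spec⟩
  surj a := by
    obtain ⟨b', hb'⟩ := a.2
    refine ⟨b', ?_⟩
    refine congrArg some ?_
    exact Subtype.ext (hinj _ _ b' (f.surj b').choose_spec hb')
  presDown := by
    intro x' hx' u hu v hv
    obtain ⟨b', hb', hfb'⟩ := hu
    injection hfb' with hfb'
    have hfu : f.f u.1 = some b' := by rw [← hfb']; exact (f.surj b').choose_spec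
    obtain ⟨v', hv'⟩ := v.2
    obtain ⟨a', hfa', hle⟩ := hdc v.1 u.1 b' hv hfu
    have hva : a' = v' := by
      rw [hfa'] at hv'
      injection hv'
    rw [hva] at hle
    refine ⟨v', hx' b' hb' v' hle, ?_⟩
    refine congrArg some ?_
    exact Subtype.ext (hinj _ _ v' (f.surj v').choose_spec hv')
  commutes := by
    intro b' a h
    injection h with h
    have : f.f a.1 = some b' := by rw [← h]; exact (f.surj b').choose_spec
    exact (f.commutes a.1 b' this).symm

lemma domProj_f (f : RealMap r r') (hdc : DC f) (a : r.carrier) :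
    (domProj f hdc).f a = pfun f hdc a := rfl

lemma domIncl_f (f : RealMap r r') (hdc : DC f) (a : (domReal f hdc).carrier) :
    (domIncl f hdc).f a = f.f a.1 := rfl

lemma domInv_f (f : RealMap r r') (hdc : DC f)
    (hinj : ∀ a b c, f.f a = some c → f.f b = some c → a = b) (b' : r'.carrier) :
    (domInv f hdc hinj).f b'
      = some ⟨(f.surj b').choose, b', (f.surj b').choose_spec⟩ := rfl

/-- The inverse of a total map out of `r'`, built from a map `f : r → r'`
with `r` extremal. -/
noncomputable def extInv (f : RealMap r r') {r'' : Realisation C} (n : RealMap r' r'')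
    (hn : n.IsTotal) (hdc2 : DC (f.comp n))
    (hinj2 : ∀ a b c, (f.comp n).f a = some c → (f.comp n).f b = some c → a = b) :
    RealMap r'' r' where
  f c := f.f ((f.comp n).surj c).choose
  surj := by
    intro b'
    obtain ⟨c, hc⟩ := hn b'
    obtain ⟨a, ha⟩ := f.surj b'
    have hha : (f.comp n).f a = some c := by
      show (f.f a).bind n.f = some c
      rw [ha]
      exact hc
    have he := hinj2 ((f.comp n).surj c).choose a c ((f.comp n).surj c).choose_spec hha
    refine ⟨c, ?_⟩
    show f.f ((f.comp n).surj c).choose = some b'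
    rw [he]
    exact ha
  presDown := by
    intro x'' hx''
    have hSdown : r.IsDown {a | ∃ c ∈ x'', (f.comp n).f a = some c} := by
      rintro a ⟨c, hc, hac⟩ b hba
      obtain ⟨c₂, hfc₂, hle⟩ := hdc2 b a c hba hac
      exact ⟨c₂, hx'' c hc c₂ hle, hfc₂⟩
    have heq : pimage (fun c => f.f ((f.comp n).surj c).choose) x''
        = pimage f.f {a | ∃ c ∈ x'', (f.comp n).f a = some c} := by
      ext b'
      constructor
      · rintro ⟨c, hc, hfc⟩
        exact ⟨((f.comp n).surj c).choose, ⟨c, hc, ((f.comp n).surj c).choose_spec⟩, hfc⟩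
      · rintro ⟨a, ⟨c, hc, hac⟩, hfa⟩
        have he : ((f.comp n).surj c).choose = a :=
          hinj2 _ _ c ((f.comp n).surj c).choose_spec hac
        refine ⟨c, hc, ?_⟩
        show f.f ((f.comp n).surj c).choose = some b'
        rw [he]
        exact hfa
    rw [heq]
    exact f.presDown _ hSdown
  commutes := by
    intro c b' hcb
    have h1 := f.commutes _ _ hcb
    have h2 := (f.comp n).commutes _ _ ((f.comp n).surj c).choose_spec
    rw [← h2]
    exact h1

lemma extIso (f : RealMap r r') {r'' : Realisation C} (n : RealMap r' r'')
    (hn : n.IsTotal) (hdc2 : DC (f.comp n))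
    (hinj2 : ∀ a b c, (f.comp n).f a = some c → (f.comp n).f b = some c → a = b) :
    ∀ b' c, n.f b' = some c ↔ (extInv f n hn hdc2 hinj2).f c = some b' := by
  intro b' c
  constructor
  · intro hbc
    obtain ⟨a, ha⟩ := f.surj b'
    have hha : (f.comp n).f a = some c := by
      show (f.f a).bind n.f = some c
      rw [ha]
      exact hbc
    have he := hinj2 ((f.comp n).surj c).choose a c ((f.comp n).surj c).choose_spec hha
    show f.f ((f.comp n).surj c).choose = some b'
    rw [he]
    exact ha
  · intro hcb
    have hcb' : f.f ((f.comp n).surj c).choose = some b' := hcb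
    have hh : (f.f ((f.comp n).surj c).choose).bind n.f = some c :=
      ((f.comp n).surj c).choose_spec
    rw [hcb'] at hh
    exact hh

end StmtAux

end Auxiliary


/-- Any map of realisations from an extremal realisation has extremal target
and factors as a projection onto a down-closed subcarrier followed by an
isomorphism. -/
theorem stmt4 {A : Type u} (C : ConfigFamily A) (r r' : Realisation C)
    (hr : r.Extremal) (f : RealMap r r') :
    r'.Extremal ∧ ∃ (r₀ : Realisation C) (p : RealMap r r₀) (i : RealMap r₀ r')
      (g : r₀.carrier → r.carrier),
      p.IsProjectionVia g ∧ r.IsDown (Set.range g) ∧ i.IsIso ∧ CompEq p i f := by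
  obtain ⟨hdc, hinj⟩ := StmtAux.key f hr
  constructor
  · intro r'' n hn
    obtain ⟨hdc2, hinj2⟩ := StmtAux.key (f.comp n) hr
    exact ⟨StmtAux.extInv f n hn hdc2 hinj2, StmtAux.extIso f n hn hdc2 hinj2⟩
  · refine ⟨StmtAux.domReal f hdc, StmtAux.domProj f hdc, StmtAux.domIncl f hdc,
      Subtype.val, ⟨Subtype.val_injective, fun a b => Iff.rfl, fun a => rfl, ?_⟩, ?_, ?_, ?_⟩
    · intro a b
      constructor
      · intro h
        have h' : StmtAux.pfun f hdc a = some b := h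
        by_cases hd : ∃ c, f.f a = some c
        · rw [StmtAux.pfun_pos f hdc hd] at h'
          injection h' with h'
          rw [← h']
        · rw [StmtAux.pfun_neg f hdc hd] at h'
          exact nomatch h'
      · intro h
        subst h
        show StmtAux.pfun f hdc b.1 = some b
        exact (StmtAux.pfun_pos f hdc b.2).trans rfl
    · intro u hu b hb
      obtain ⟨a₀, rfl⟩ := hu
      obtain ⟨a', ha'⟩ := a₀.2
      obtain ⟨b', hfb, _⟩ := hdc b a₀.1 a' hb ha'
      exact ⟨⟨b, b', hfb⟩, rfl⟩
    · refine ⟨StmtAux.domInv f hdc hinj, ?_⟩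
      intro a b'
      constructor
      · intro h
        erw [StmtAux.domIncl_f] at h
        erw [StmtAux.domInv_f]
        refine congrArg some ?_
        exact Subtype.ext (hinj _ _ b' (f.surj b').choose_spec h)
      · intro h
        erw [StmtAux.domInv_f] at h
        injection h with h
        erw [StmtAux.domIncl_f, ← h]
        exact (f.surj b').choose_spec
    · intro a c
      constructor
      · intro h
        refine ⟨⟨a, c, h⟩, ?_, ?_⟩
        · erw [StmtAux.domProj_f, StmtAux.pfun_pos f hdc ⟨c, h⟩]
        · erw [StmtAux.domIncl_f]
          exact h
      · rintro ⟨b, hp, hi⟩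
        erw [StmtAux.domProj_f] at hp
        by_cases hd : ∃ c, f.f a = some c
        · erw [StmtAux.pfun_pos f hdc hd] at hp
          injection hp with hp
          erw [StmtAux.domIncl_f] at hi
          rw [← hp] at hi
          exact hi
        · erw [StmtAux.pfun_neg f hdc hd] at hp
          exact nomatch hp
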